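/- Let S be an N×N Hermitian positive semidefinite complex matrix with eigenvalues λ_1(S) ≥ λ_2(S) ≥ … ≥ λ_N(S) listed in decreasing order with multiplicity, let 1 ≤ M ≤ N, and let c > 0 be real. If F* ∈ ℂ^{N×M} has as its columns orthonormal eigenvectors of S associated with the M largest eigenvalues λ_1(S), …, λ_M(S), then Tr(F*ᴴSF* (c·F*ᴴSF* + I_M)⁻¹) = Σ_{i=1}^M λ_i(S)/(c·λ_i(S) + 1); consequently F* maximizes Tr(FᴴSF (c·FᴴSF + I_M)⁻¹) over all semi-orthogonal F ∈ ℂ^{N×M} (i.e., all F with FᴴF = I_M). -/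

import Mathlib

open Matrix
open scoped ComplexOrder InnerProductSpace

lemma sum_dot {n : ℕ} {ι : Type*} [Fintype ι] (f : ι → (Fin n → ℂ)) (v : Fin n → ℂ) :
    dotProduct (∑ i, f i) v = ∑ i, dotProduct (f i) v := by
  simp only [dotProduct, Finset.sum_apply, Finset.sum_mul]
  exact Finset.sum_comm

lemma dot_sum {n : ℕ} {ι : Type*} [Fintype ι] (v : Fin n → ℂ) (f : ι → (Fin n → ℂ)) :
    dotProduct v (∑ i, f i) = ∑ i, dotProduct v (f i) := by
  simp only [dotProduct, Finset.sum_apply, Finset.mul_sum]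
  exact Finset.sum_comm

lemma trace_diag_inv {m : ℕ} (f g : Fin m → ℂ) (hg : ∀ i, g i ≠ 0) :
    Matrix.trace (Matrix.diagonal f * (Matrix.diagonal g)⁻¹) = ∑ i, f i / g i := by
  have hinv : (Matrix.diagonal g)⁻¹ = Matrix.diagonal (fun i => (g i)⁻¹) := by
    apply Matrix.inv_eq_right_inv
    rw [Matrix.diagonal_mul_diagonal,
      show (fun i => g i * (g i)⁻¹) = fun _ => (1:ℂ) from funext fun i => mul_inv_cancel₀ (hg i),
      Matrix.diagonal_one]
  rw [hinv, Matrix.diagonal_mul_diagonal, Matrix.trace_diagonal]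
  simp [div_eq_mul_inv]

lemma diag_shift {m : ℕ} (d : Fin m → ℝ) (c : ℝ) :
    (c : ℂ) • (Matrix.diagonal fun i => (d i : ℂ)) + 1
      = Matrix.diagonal (fun i => ((c * d i + 1 : ℝ) : ℂ)) := by
  ext i j
  rcases eq_or_ne i j with h | h
  · subst h; simp [Matrix.diagonal_apply_eq, Matrix.one_apply_eq]
  · simp [Matrix.diagonal_apply_ne _ h, Matrix.one_apply_ne h]

lemma trace_diag {m : ℕ} (d : Fin m → ℝ) (hd : ∀ i, 0 ≤ d i) {c : ℝ} (hc : 0 < c) :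
    Matrix.trace ((Matrix.diagonal fun i => (d i : ℂ)) *
      ((c : ℂ) • (Matrix.diagonal fun i => (d i : ℂ)) + 1)⁻¹)
    = ((∑ i, d i / (c * d i + 1) : ℝ) : ℂ) := by
  have hne : ∀ i, ((c * d i + 1 : ℝ) : ℂ) ≠ 0 := by
    intro i
    have h1 : (0:ℝ) < c * d i + 1 := by nlinarith [mul_nonneg hc.le (hd i)]
    exact_mod_cast Complex.ofReal_ne_zero.mpr h1.ne'
  rw [diag_shift, trace_diag_inv _ _ hne]
  push_cast
  rfl

lemma g_mono {c x y : ℝ} (hc : 0 < c) (hx : 0 ≤ x) (hxy : x ≤ y) :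
    x / (c * x + 1) ≤ y / (c * y + 1) := by
  have hx1 : (0:ℝ) < c * x + 1 := by positivity
  have hy1 : (0:ℝ) < c * y + 1 := by nlinarith
  rw [div_le_div_iff₀ hx1 hy1]; nlinarith

lemma dot_expand {n : ℕ} {ι : Type*} [Fintype ι] [DecidableEq ι] (w : ι → (Fin n → ℂ))
    (hw : ∀ i j, dotProduct (star (w i)) (w j) = if i = j then 1 else 0)
    (a b : ι → ℂ) :
    dotProduct (star (∑ i, a i • w i)) (∑ j, b j • w j)
      = ∑ i, (starRingEnd ℂ) (a i) * b i := by
  rw [star_sum, sum_dot]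
  have key : ∀ i, dotProduct (star (a i • w i)) (∑ j, b j • w j)
      = (starRingEnd ℂ) (a i) * b i := by
    intro i
    rw [star_smul, dot_sum]
    have h2 : ∀ j, dotProduct (star (a i) • star (w i)) (b j • w j)
        = (starRingEnd ℂ) (a i) * b j * (if i = j then 1 else 0) := by
      intro j
      rw [smul_dotProduct, dotProduct_smul, hw]
      simp only [smul_eq_mul, Complex.star_def]
      ring
    simp only [h2, mul_ite, mul_one, mul_zero, Finset.sum_ite_eq, Finset.mem_univ, if_true]
  simp only [key]


lemma diag_inv {m : ℕ} (g : Fin m → ℂ) (hg : ∀ i, g i ≠ 0) :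
    (Matrix.diagonal g)⁻¹ = Matrix.diagonal (fun i => (g i)⁻¹) := by
  apply Matrix.inv_eq_right_inv
  rw [Matrix.diagonal_mul_diagonal,
    show (fun i => g i * (g i)⁻¹) = fun _ => (1:ℂ) from funext fun i => mul_inv_cancel₀ (hg i),
    Matrix.diagonal_one]

lemma mulConjMul {m : ℕ} {U : Matrix (Fin m) (Fin m) ℂ} (h : star U * U = 1)
    (X Y : Matrix (Fin m) (Fin m) ℂ) :
    (U * X * star U) * (U * Y * star U) = U * (X * Y) * star U := by
  simp only [Matrix.mul_assoc]
  rw [← Matrix.mul_assoc (star U) U, h, Matrix.one_mul]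

lemma trace_psd {m : ℕ} (B : Matrix (Fin m) (Fin m) ℂ) (hB : B.PosSemidef) {c : ℝ} (hc : 0 < c) :
    Matrix.trace (B * ((c : ℂ) • B + 1)⁻¹)
      = ((∑ i, hB.1.eigenvalues i / (c * hB.1.eigenvalues i + 1) : ℝ) : ℂ) := by
  set U : Matrix (Fin m) (Fin m) ℂ := (hB.1.eigenvectorUnitary : Matrix (Fin m) (Fin m) ℂ) with hU
  have hU1 : star U * U = 1 := Matrix.mem_unitaryGroup_iff'.mp hB.1.eigenvectorUnitary.2
  have hU2 : U * star U = 1 := Matrix.mem_unitaryGroup_iff.mp hB.1.eigenvectorUnitary.2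
  set e := hB.1.eigenvalues with he
  set D : Matrix (Fin m) (Fin m) ℂ := Matrix.diagonal (fun i => (e i : ℂ)) with hD
  have hspec : B = U * D * star U := by
    have h := hB.1.spectral_theorem
    rwa [show Matrix.diagonal (RCLike.ofReal ∘ hB.1.eigenvalues) = D from rfl] at h
  have hne : ∀ i, ((c * e i + 1 : ℝ) : ℂ) ≠ 0 := by
    intro i
    have h1 : (0:ℝ) < c * e i + 1 := by
      nlinarith [mul_nonneg hc.le (hB.eigenvalues_nonneg i)]
    exact_mod_cast Complex.ofReal_ne_zero.mpr h1.ne'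
  have hDshift : (c : ℂ) • D + 1 = Matrix.diagonal (fun i => ((c * e i + 1 : ℝ) : ℂ)) :=
    diag_shift e c
  have hDinv : ((c : ℂ) • D + 1) * ((c : ℂ) • D + 1)⁻¹ = 1 := by
    rw [hDshift, diag_inv _ hne, Matrix.diagonal_mul_diagonal,
      show (fun i => ((c * e i + 1 : ℝ) : ℂ) * (((c * e i + 1 : ℝ) : ℂ))⁻¹) = fun _ => (1:ℂ)
        from funext fun i => mul_inv_cancel₀ (hne i),
      Matrix.diagonal_one]
  have hplus : (c : ℂ) • B + 1 = U * ((c : ℂ) • D + 1) * star U := by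
    rw [Matrix.mul_add, Matrix.add_mul, Matrix.mul_one, hU2, Matrix.mul_smul, Matrix.smul_mul,
      hspec]
  have hinv : ((c : ℂ) • B + 1)⁻¹ = U * ((c : ℂ) • D + 1)⁻¹ * star U := by
    apply Matrix.inv_eq_right_inv
    rw [hplus, mulConjMul hU1, hDinv, Matrix.mul_one, hU2]
  rw [hinv, hspec]
  have step : U * D * star U * (U * ((c : ℂ) • D + 1)⁻¹ * star U)
      = U * (D * ((c : ℂ) • D + 1)⁻¹) * star U := by
    exact mulConjMul hU1 D (((c : ℂ) • D + 1)⁻¹)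
  rw [step, Matrix.trace_mul_comm, ← Matrix.mul_assoc, ← Matrix.mul_assoc, hU1, Matrix.one_mul]
  exact trace_diag e (fun i => hB.eigenvalues_nonneg i) hc


lemma ortho_family {m : ℕ} {ι : Type*} (b : OrthonormalBasis (Fin m) ℂ (EuclideanSpace ℂ (Fin m)))
    (f : ι → Fin m) (hf : Function.Injective f) [DecidableEq ι] :
    ∀ i j : ι, dotProduct (star (⇑(b (f i)) : Fin m → ℂ)) (⇑(b (f j)) : Fin m → ℂ)
      = if i = j then 1 else 0 := by
  intro i j
  have h := orthonormal_iff_ite.mp b.orthonormal (f i) (f j)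
  rw [EuclideanSpace.inner_eq_star_dotProduct, dotProduct_comm] at h
  simp only [hf.eq_iff] at h
  exact h

lemma basis_expand {m : ℕ} (b : OrthonormalBasis (Fin m) ℂ (EuclideanSpace ℂ (Fin m)))
    (x : Fin m → ℂ) :
    x = ∑ i, (dotProduct (star (⇑(b i) : Fin m → ℂ)) x) • (⇑(b i) : Fin m → ℂ) := by
  have h := congrArg WithLp.ofLp (b.sum_repr' (WithLp.toLp 2 x))
  simp only [WithLp.ofLp_sum, WithLp.ofLp_smul, EuclideanSpace.inner_eq_star_dotProduct,
    dotProduct_comm] at h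
  simp_rw [dotProduct_comm x] at h
  exact h.symm

lemma interlacing {N M : ℕ} (hMN : M ≤ N) {S : Matrix (Fin N) (Fin N) ℂ}
    (hS : S.IsHermitian) {F : Matrix (Fin N) (Fin M) ℂ} (hF : Fᴴ * F = 1)
    (hA : (Fᴴ * S * F).IsHermitian)
    (μ : Fin N → ℝ) (hμdec : ∀ i j : Fin N, i ≤ j → μ j ≤ μ i)
    (σ : Equiv.Perm (Fin N)) (hμσ : μ = hS.eigenvalues ∘ σ)
    (ν : Fin M → ℝ) (hνdec : ∀ i j : Fin M, i ≤ j → ν j ≤ ν i)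
    (τ : Equiv.Perm (Fin M)) (hντ : ν = hA.eigenvalues ∘ τ)
    (k : Fin M) : ν k ≤ μ (Fin.castLE hMN k) := by
  classical
  set A := Fᴴ * S * F with hAdef
  -- eigenvector families
  set u : Fin N → (Fin N → ℂ) := fun i => ⇑(hS.eigenvectorBasis (σ i)) with hu
  set v : Fin M → (Fin M → ℂ) := fun j => ⇑(hA.eigenvectorBasis (τ j)) with hv
  have hu_orth : ∀ i j, dotProduct (star (u i)) (u j) = if i = j then 1 else 0 :=
    ortho_family hS.eigenvectorBasis σ σ.injective
  have hv_orth : ∀ i j, dotProduct (star (v i)) (v j) = if i = j then 1 else 0 :=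
    ortho_family hA.eigenvectorBasis τ τ.injective
  have hu_eig : ∀ i, S *ᵥ u i = (μ i : ℂ) • u i := by
    intro i
    rw [hμσ]
    show S *ᵥ u i = ((hS.eigenvalues (σ i) : ℝ) : ℂ) • u i
    have hc : ((hS.eigenvalues (σ i) : ℝ) : ℂ) • u i = (hS.eigenvalues (σ i)) • u i := by
      funext l; simp [Complex.real_smul]
    rw [hc]
    exact hS.mulVec_eigenvectorBasis (σ i)
  have hv_eig : ∀ j, A *ᵥ v j = (ν j : ℂ) • v j := by
    intro j
    rw [hντ]
    show A *ᵥ v j = ((hA.eigenvalues (τ j) : ℝ) : ℂ) • v j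
    have hc : ((hA.eigenvalues (τ j) : ℝ) : ℂ) • v j = (hA.eigenvalues (τ j)) • v j := by
      funext l; simp [Complex.real_smul]
    rw [hc]
    exact hA.mulVec_eigenvectorBasis (τ j)
  -- dimension bookkeeping
  have hK1M : (k : ℕ) + 1 ≤ M := k.isLt
  have hKN : (k : ℕ) ≤ N := le_trans k.isLt.le hMN
  -- the compression matrix and a kernel vector
  set Vm : Matrix (Fin M) (Fin ((k : ℕ)+1)) ℂ := fun i j => v (Fin.castLE hK1M j) i with hVm
  set Um : Matrix (Fin (k : ℕ)) (Fin N) ℂ := fun i l => star (u (Fin.castLE hKN i)) l with hUm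
  set G : Matrix (Fin (k : ℕ)) (Fin ((k : ℕ)+1)) ℂ := Um * (F * Vm) with hG
  have hker : ∃ cc : Fin ((k : ℕ)+1) → ℂ, cc ≠ 0 ∧ G *ᵥ cc = 0 := by
    by_contra hcon
    push_neg at hcon
    have hinj : Function.Injective G.mulVecLin := by
      rw [← LinearMap.ker_eq_bot, LinearMap.ker_eq_bot']
      intro m hm
      by_contra hm0
      exact hcon m hm0 (by simpa using hm)
    have hle := LinearMap.finrank_le_finrank_of_injective hinj
    rw [Module.finrank_fin_fun, Module.finrank_fin_fun] at hle
    omega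
  obtain ⟨cc, hcc0, hccker⟩ := hker
  set y : Fin M → ℂ := ∑ j : Fin ((k : ℕ)+1), cc j • v (Fin.castLE hK1M j) with hy
  set x : Fin N → ℂ := F *ᵥ y with hx
  have hyV : y = Vm *ᵥ cc := by
    funext i
    rw [hy, hVm]
    simp [Matrix.mulVec, dotProduct, Finset.sum_apply, mul_comm]
  have hud : ∀ i : Fin (k : ℕ), dotProduct (star (u (Fin.castLE hKN i))) x = 0 := by
    intro i
    have h1 : G *ᵥ cc = Um *ᵥ x := by
      rw [hx, hyV, Matrix.mulVec_mulVec, Matrix.mulVec_mulVec, hG, Matrix.mul_assoc]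
    have h2 := congrFun (h1.symm.trans hccker) i
    exact h2
  -- orthonormality of the chosen sub-family of v
  have hv_sub : ∀ i j : Fin ((k : ℕ)+1),
      dotProduct (star (v (Fin.castLE hK1M i))) (v (Fin.castLE hK1M j))
        = if i = j then 1 else 0 := by
    intro i j
    rw [hv_orth]
    simp [Fin.castLE_inj]
  set t : Fin ((k : ℕ)+1) → ℝ := fun j => Complex.normSq (cc j) with ht
  set T : ℝ := ∑ j, t j with hT
  have hyy : dotProduct (star y) y = (T : ℂ) := by
    rw [hy, dot_expand _ hv_sub cc cc]
    have : ∀ j, (starRingEnd ℂ) (cc j) * cc j = ((t j : ℝ) : ℂ) := by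
      intro j; rw [mul_comm, Complex.mul_conj, ht]
    rw [Finset.sum_congr rfl (fun j _ => this j), hT]
    push_cast; rfl
  have hAy : dotProduct (star y) (A *ᵥ y)
      = ((∑ j, ν (Fin.castLE hK1M j) * t j : ℝ) : ℂ) := by
    have hsum : A *ᵥ y = ∑ j, ((ν (Fin.castLE hK1M j) : ℂ) * cc j) • v (Fin.castLE hK1M j) := by
      rw [hy]
      rw [show A *ᵥ (∑ j : Fin ((k : ℕ)+1), cc j • v (Fin.castLE hK1M j))
          = ∑ j : Fin ((k : ℕ)+1), A *ᵥ (cc j • v (Fin.castLE hK1M j)) from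
        map_sum A.mulVecLin _ _]
      refine Finset.sum_congr rfl fun j _ => ?_
      rw [Matrix.mulVec_smul, hv_eig, smul_smul, mul_comm (cc j)]
    rw [hy, hsum, dot_expand _ hv_sub cc _]
    have : ∀ j, (starRingEnd ℂ) (cc j) * ((ν (Fin.castLE hK1M j) : ℂ) * cc j)
        = ((ν (Fin.castLE hK1M j) * t j : ℝ) : ℂ) := by
      intro j
      calc (starRingEnd ℂ) (cc j) * ((ν (Fin.castLE hK1M j) : ℂ) * cc j)
          = (ν (Fin.castLE hK1M j) : ℂ) * (cc j * (starRingEnd ℂ) (cc j)) := by ring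
        _ = (ν (Fin.castLE hK1M j) : ℂ) * ((Complex.normSq (cc j) : ℝ) : ℂ) := by
            rw [Complex.mul_conj]
        _ = _ := by push_cast; ring
    rw [Finset.sum_congr rfl (fun j _ => this j)]
    push_cast; rfl
  -- expansion of x in the u family
  set d : Fin N → ℂ := fun i => dotProduct (star (u i)) x with hd
  set s : Fin N → ℝ := fun i => Complex.normSq (d i) with hs
  have hx_expand : x = ∑ i, d i • u i := by
    have h := basis_expand hS.eigenvectorBasis x
    have h2 := Equiv.sum_comp σ
      (fun p => (dotProduct (star (⇑(hS.eigenvectorBasis p) : Fin N → ℂ)) x) •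
        (⇑(hS.eigenvectorBasis p) : Fin N → ℂ))
    exact h.trans h2.symm
  have hxx : dotProduct (star x) x = ((∑ i, s i : ℝ) : ℂ) := by
    conv_lhs => rw [hx_expand]
    rw [dot_expand u hu_orth d d]
    have : ∀ i, (starRingEnd ℂ) (d i) * d i = ((s i : ℝ) : ℂ) := by
      intro i; rw [mul_comm, Complex.mul_conj, hs]
    rw [Finset.sum_congr rfl (fun i _ => this i)]
    push_cast; rfl
  have hSx : dotProduct (star x) (S *ᵥ x) = ((∑ i, μ i * s i : ℝ) : ℂ) := by
    conv_lhs => rw [hx_expand]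
    have hsum : S *ᵥ (∑ i, d i • u i) = ∑ i, ((μ i : ℂ) * d i) • u i := by
      rw [show S *ᵥ (∑ i, d i • u i) = ∑ i, S *ᵥ (d i • u i) from map_sum S.mulVecLin _ _]
      refine Finset.sum_congr rfl fun i _ => ?_
      rw [Matrix.mulVec_smul, hu_eig, smul_smul, mul_comm (d i)]
    rw [hsum, dot_expand u hu_orth d _]
    have : ∀ i, (starRingEnd ℂ) (d i) * ((μ i : ℂ) * d i) = ((μ i * s i : ℝ) : ℂ) := by
      intro i
      calc (starRingEnd ℂ) (d i) * ((μ i : ℂ) * d i)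
          = (μ i : ℂ) * (d i * (starRingEnd ℂ) (d i)) := by ring
        _ = (μ i : ℂ) * ((Complex.normSq (d i) : ℝ) : ℂ) := by rw [Complex.mul_conj]
        _ = _ := by push_cast; rw [hs]
    rw [Finset.sum_congr rfl (fun i _ => this i)]
    push_cast; rfl
  -- transfer between x and y
  have hxy1 : dotProduct (star x) x = dotProduct (star y) y := by
    rw [hx, Matrix.star_mulVec, ← dotProduct_mulVec, Matrix.mulVec_mulVec, hF,
      Matrix.one_mulVec]
  have hxy2 : dotProduct (star x) (S *ᵥ x) = dotProduct (star y) (A *ᵥ y) := by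
    rw [hx, Matrix.star_mulVec, Matrix.mulVec_mulVec, ← dotProduct_mulVec,
      Matrix.mulVec_mulVec, hAdef, Matrix.mul_assoc]
  -- real identities
  have E1 : (∑ j, ν (Fin.castLE hK1M j) * t j : ℝ) = ∑ i, μ i * s i := by
    have h := hxy2
    rw [hAy, hSx] at h
    exact_mod_cast h.symm
  have E2 : T = ∑ i, s i := by
    have h := hxy1
    rw [hxx, hyy] at h
    exact_mod_cast h.symm
  have hTpos : 0 < T := by
    obtain ⟨j, hj⟩ := Function.ne_iff.mp hcc0
    rw [hT]
    refine Finset.sum_pos' (fun i _ => Complex.normSq_nonneg _) ⟨j, Finset.mem_univ j, ?_⟩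
    exact Complex.normSq_pos.mpr hj
  have hs0 : ∀ i : Fin N, (i : ℕ) < (k : ℕ) → s i = 0 := by
    intro i hi
    have hieq : i = Fin.castLE hKN ⟨(i : ℕ), hi⟩ := by ext; rfl
    have h0 : d i = 0 := by
      show dotProduct (star (u i)) x = 0
      rw [hieq]
      exact hud ⟨(i : ℕ), hi⟩
    show Complex.normSq (d i) = 0
    rw [h0]
    simp
  -- inequalities
  have hlow : ν k * T ≤ ∑ j, ν (Fin.castLE hK1M j) * t j := by
    rw [hT, Finset.mul_sum]
    refine Finset.sum_le_sum fun j _ => ?_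
    refine mul_le_mul_of_nonneg_right ?_ (Complex.normSq_nonneg _)
    exact hνdec (Fin.castLE hK1M j) k (by rw [Fin.le_def]; exact Nat.lt_succ_iff.mp j.isLt)
  have hup : (∑ i, μ i * s i : ℝ) ≤ μ (Fin.castLE hMN k) * T := by
    rw [E2, Finset.mul_sum]
    refine Finset.sum_le_sum fun i _ => ?_
    rcases lt_or_ge (i : ℕ) (k : ℕ) with hik | hik
    · rw [hs0 i hik]; simp
    · refine mul_le_mul_of_nonneg_right ?_ (Complex.normSq_nonneg _)
      exact hμdec (Fin.castLE hMN k) i (by rw [Fin.le_def]; exact hik)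
  have final : ν k * T ≤ μ (Fin.castLE hMN k) * T := by
    calc ν k * T ≤ ∑ j, ν (Fin.castLE hK1M j) * t j := hlow
      _ = ∑ i, μ i * s i := E1
      _ ≤ μ (Fin.castLE hMN k) * T := hup
  exact le_of_mul_le_mul_right final hTpos



/-- optimality of the top-`M` eigenvector beamformer,
Remark 1.  Let `S` be an `N×N` Hermitian positive semidefinite complex matrix
whose eigenvalues, listed in decreasing order with multiplicity, are given by
the decreasing rearrangement `μ`.  If the columns of `F* ∈ ℂ^{N×M}` are
orthonormal eigenvectors of `S` associated with the `M` largest eigenvalues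
`μ 0, …, μ (M-1)`, then
`Tr(F*ᴴSF* (c F*ᴴSF* + I)⁻¹) = Σ_{i<M} μ i / (c μ i + 1)`, and consequently
`F*` maximizes `Tr(FᴴSF (c FᴴSF + I)⁻¹)` over all semi-orthogonal
`F ∈ ℂ^{N×M}`. -/
theorem stmt7 (N M : ℕ) (hM : 1 ≤ M) (hMN : M ≤ N)
    (S : Matrix (Fin N) (Fin N) ℂ) (hS : S.PosSemidef)
    (μ : Fin N → ℝ) (hμdec : ∀ i j : Fin N, i ≤ j → μ j ≤ μ i)
    (hμ : ∃ σ : Equiv.Perm (Fin N), μ = hS.1.eigenvalues ∘ σ)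
    (Fstar : Matrix (Fin N) (Fin M) ℂ) (hFo : Fstarᴴ * Fstar = 1)
    (hFeig : ∀ j : Fin M,
      S *ᵥ (fun i => Fstar i j) = (μ (Fin.castLE hMN j) : ℂ) • (fun i => Fstar i j))
    (c : ℝ) (hc : 0 < c) :
    Matrix.trace ((Fstarᴴ * S * Fstar) * ((c : ℂ) • (Fstarᴴ * S * Fstar) + 1)⁻¹)
      = ((∑ i : Fin M, μ (Fin.castLE hMN i) / (c * μ (Fin.castLE hMN i) + 1) : ℝ) : ℂ) ∧
    ∀ F : Matrix (Fin N) (Fin M) ℂ, Fᴴ * F = 1 →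
      ∃ r : ℝ,
        Matrix.trace ((Fᴴ * S * F) * ((c : ℂ) • (Fᴴ * S * F) + 1)⁻¹) = (r : ℂ) ∧
        r ≤ ∑ i : Fin M, μ (Fin.castLE hMN i) / (c * μ (Fin.castLE hMN i) + 1) := by
  classical
  obtain ⟨σ, hμσ⟩ := hμ
  have hμ0 : ∀ i, 0 ≤ μ i := by
    intro i
    rw [hμσ]
    exact hS.eigenvalues_nonneg _
  constructor
  · -- the trace formula for the eigenvector beamformer
    have hdiag : Fstarᴴ * S * Fstar
        = Matrix.diagonal (fun j => (μ (Fin.castLE hMN j) : ℂ)) := by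
      have hSF : S * Fstar = Matrix.of (fun i j => (μ (Fin.castLE hMN j) : ℂ) * Fstar i j) := by
        ext i j
        have h := congrFun (hFeig j) i
        simpa [Matrix.mul_apply, Matrix.mulVec, dotProduct] using h
      rw [Matrix.mul_assoc, hSF]
      ext i j
      rw [Matrix.mul_apply]
      simp only [Matrix.conjTranspose_apply, Matrix.of_apply]
      have hpull : ∑ l, star (Fstar l i) * ((μ (Fin.castLE hMN j) : ℂ) * Fstar l j)
          = (μ (Fin.castLE hMN j) : ℂ) * ∑ l, star (Fstar l i) * Fstar l j := by
        rw [Finset.mul_sum]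
        exact Finset.sum_congr rfl fun l _ => by ring
      rw [hpull]
      have h1 : (∑ l, star (Fstar l i) * Fstar l j) = (1 : Matrix (Fin M) (Fin M) ℂ) i j := by
        rw [← hFo]
        simp [Matrix.mul_apply, Matrix.conjTranspose_apply]
      rw [h1]
      rcases eq_or_ne i j with h | h
      · subst h; simp [Matrix.one_apply_eq, Matrix.diagonal_apply_eq]
      · simp [Matrix.one_apply_ne h, Matrix.diagonal_apply_ne _ h]
    rw [hdiag]
    exact trace_diag _ (fun i => hμ0 _) hc
  · -- optimality
    intro F hFF
    have hApsd : (Fᴴ * S * F).PosSemidef := hS.conjTranspose_mul_mul_same F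
    refine ⟨∑ i, hApsd.1.eigenvalues i / (c * hApsd.1.eigenvalues i + 1),
      trace_psd _ hApsd hc, ?_⟩
    set e := hApsd.1.eigenvalues with he
    set τ : Equiv.Perm (Fin M) := Tuple.sort (fun i => - e i) with hτ
    set ν : Fin M → ℝ := e ∘ τ with hν
    have hνdec : ∀ i j : Fin M, i ≤ j → ν j ≤ ν i := by
      intro i j hij
      have h := Tuple.monotone_sort (fun i => - e i) hij
      simp only [Function.comp_apply] at h
      have : - e (τ i) ≤ - e (τ j) := h
      simp only [hν, Function.comp_apply]
      linarith
    have hsum : (∑ i, e i / (c * e i + 1)) = ∑ i, ν i / (c * ν i + 1) := by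
      rw [hν]
      exact (Equiv.sum_comp τ (fun i => e i / (c * e i + 1))).symm
    rw [hsum]
    refine Finset.sum_le_sum fun i _ => ?_
    have hint : ν i ≤ μ (Fin.castLE hMN i) :=
      interlacing hMN hS.1 hFF hApsd.1 μ hμdec σ hμσ ν hνdec τ hν i
    refine g_mono hc ?_ hint
    rw [hν]
    exact hApsd.eigenvalues_nonneg _
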